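/- In a normal Cayley graph X = X(G, C), the set H of vertices strongly cospectral to the identity is a normal subgroup of G that is an elementary abelian 2-group (every nonidentity element has order 2 and H is abelian). -/

import Mathlib

open Matrix

/-- `E` is the orthogonal projection onto the eigenspace of `A` for the eigenvalue `μ`. -/
def IsEigenProjection {V : Type*} [Fintype V] (A : Matrix V V ℝ) (μ : ℝ)
    (E : Matrix V V ℝ) : Prop :=
  E * E = E ∧ E.IsSymm ∧
    (∀ x : V → ℝ, A.mulVec (E.mulVec x) = μ • E.mulVec x) ∧
    (∀ y : V → ℝ, A.mulVec y = μ • y → E.mulVec y = y)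

/-- Vertices `u` and `v` are strongly cospectral: `E e_u = ± E e_v` for every spectral
idempotent `E` of `A`. -/
def StronglyCospectral {V : Type*} [Fintype V] [DecidableEq V]
    (A : Matrix V V ℝ) (u v : V) : Prop :=
  ∀ (μ : ℝ) (E : Matrix V V ℝ), IsEigenProjection A μ E →
    E.mulVec (Pi.single u 1) = E.mulVec (Pi.single v 1) ∨
    E.mulVec (Pi.single u 1) = -E.mulVec (Pi.single v 1)

/-- The adjacency matrix of the Cayley graph `X(G, C)`: `g ~ h` iff `h * g⁻¹ ∈ C`. -/
def cayleyAdj {G : Type*} [Group G] [Fintype G] [DecidableEq G] (C : Finset G) :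
    Matrix G G ℝ :=
  Matrix.of fun g h => if h * g⁻¹ ∈ C then 1 else 0

namespace SC5

set_option linter.unusedSectionVars false

variable {n : Type*} [Fintype n] [DecidableEq n]

lemma vmv_mulVec (v w x : n → ℝ) :
    (vecMulVec v w).mulVec x = (w ⬝ᵥ x) • v := by
  ext i
  simp only [vecMulVec, mulVec, dotProduct, of_apply, Pi.smul_apply, smul_eq_mul,
    Finset.sum_mul, Finset.mul_sum]
  exact Finset.sum_congr rfl fun j _ => by ring

lemma mat_ext_of_mulVec {M N : Matrix n n ℝ} (h : ∀ x, M.mulVec x = N.mulVec x) : M = N := by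
  ext i j
  have := congrFun (h (Pi.single j 1)) i
  simpa [mulVec_single] using this

lemma sum_mulVec' {ι : Type*} (s : Finset ι) (M : ι → Matrix n n ℝ) (x : n → ℝ) :
    (∑ i ∈ s, M i).mulVec x = ∑ i ∈ s, (M i).mulVec x := by
  ext j
  simp only [mulVec, dotProduct, Finset.sum_apply, Matrix.sum_apply, Finset.sum_mul]
  rw [Finset.sum_comm]

lemma mulVec_sum_vec (M : Matrix n n ℝ) {ι : Type*} (s : Finset ι) (f : ι → n → ℝ) :
    M.mulVec (∑ i ∈ s, f i) = ∑ i ∈ s, M.mulVec (f i) := by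
  ext j
  simp only [mulVec, dotProduct, Finset.sum_apply, Finset.mul_sum]
  rw [Finset.sum_comm]

lemma symm_dot {M : Matrix n n ℝ} (hM : Mᵀ = M) (u w : n → ℝ) :
    M.mulVec u ⬝ᵥ w = u ⬝ᵥ M.mulVec w := by
  rw [← hM, mulVec_transpose, ← dotProduct_mulVec, hM]

section spectral

variable (A : Matrix n n ℝ)

lemma herm_transpose (hA : A.IsHermitian) : Aᵀ = A := by
  ext i j
  have := congrFun (congrFun hA i) j
  simpa using this

/-- eigenvector as a plain function -/
noncomputable def v (hA : A.IsHermitian) (j : n) : n → ℝ := (hA.eigenvectorBasis j : n → ℝ)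

lemma v_orth (hA : A.IsHermitian) (j k : n) : v A hA j ⬝ᵥ v A hA k = if j = k then 1 else 0 := by
  have h := hA.eigenvectorBasis.orthonormal
  rw [orthonormal_iff_ite] at h
  have := h j k
  simpa [v, EuclideanSpace.inner_eq_star_dotProduct, dotProduct, mul_comm] using this

lemma v_eig (hA : A.IsHermitian) (j : n) : A.mulVec (v A hA j) = hA.eigenvalues j • v A hA j :=
  hA.mulVec_eigenvectorBasis j

lemma v_complete (hA : A.IsHermitian) (w : n → ℝ) : ∑ j, (v A hA j ⬝ᵥ w) • v A hA j = w := by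
  have h := hA.eigenvectorBasis.sum_repr' (WithLp.toLp 2 w : EuclideanSpace ℝ n)
  have h2 : ∀ j, (inner ℝ (hA.eigenvectorBasis j) (WithLp.toLp 2 w : EuclideanSpace ℝ n) : ℝ)
      = v A hA j ⬝ᵥ w := by
    intro j
    simp [v, EuclideanSpace.inner_eq_star_dotProduct, dotProduct, mul_comm]
  calc ∑ j, (v A hA j ⬝ᵥ w) • v A hA j
      = ((∑ j, (inner ℝ (hA.eigenvectorBasis j) (WithLp.toLp 2 w : EuclideanSpace ℝ n) : ℝ) •
          hA.eigenvectorBasis j : EuclideanSpace ℝ n) : n → ℝ) := by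
        simp only [h2]; simp [v, WithLp.ofLp_sum, WithLp.ofLp_smul]
    _ = w := by rw [h]

/-- orthogonal projection onto the eigenspace of `hA.eigenvalues j` -/
noncomputable def proj (hA : A.IsHermitian) (j : n) : Matrix n n ℝ :=
  ∑ k, if hA.eigenvalues k = hA.eigenvalues j then vecMulVec (v A hA k) (v A hA k) else 0

lemma proj_mulVec (hA : A.IsHermitian) (j : n) (x : n → ℝ) :
    (proj A hA j).mulVec x
      = ∑ k, if hA.eigenvalues k = hA.eigenvalues j then (v A hA k ⬝ᵥ x) • v A hA k else 0 := by
  rw [proj, sum_mulVec']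
  refine Finset.sum_congr rfl fun k _ => ?_
  split <;> simp [vmv_mulVec]

lemma proj_mulVec_v (hA : A.IsHermitian) (j k : n) :
    (proj A hA j).mulVec (v A hA k)
      = if hA.eigenvalues k = hA.eigenvalues j then v A hA k else 0 := by
  rw [proj_mulVec]
  rw [Finset.sum_eq_single k]
  · split <;> simp [v_orth]
  · intro l _ hl
    split
    · rw [v_orth]
      simp [hl]
    · rfl
  · simp

lemma proj_symm (hA : A.IsHermitian) (j : n) : (proj A hA j)ᵀ = proj A hA j := by
  ext g h
  simp only [transpose_apply, proj, Matrix.sum_apply]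
  refine Finset.sum_congr rfl fun k _ => ?_
  split <;> simp [vecMulVec, mul_comm]

lemma proj_isEigen (hA : A.IsHermitian) (j : n) : IsEigenProjection A (hA.eigenvalues j) (proj A hA j) := by
  refine ⟨?_, proj_symm A hA j, ?_, ?_⟩
  · apply mat_ext_of_mulVec
    intro x
    rw [← mulVec_mulVec, proj_mulVec A hA j x, mulVec_sum_vec]
    refine Finset.sum_congr rfl fun k _ => ?_
    by_cases hk : hA.eigenvalues k = hA.eigenvalues j
    · simp only [hk, if_true, mulVec_smul, proj_mulVec_v, if_true]
    · simp [hk]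
  · intro x
    rw [proj_mulVec, mulVec_sum_vec, Finset.smul_sum]
    refine Finset.sum_congr rfl fun k _ => ?_
    by_cases hk : hA.eigenvalues k = hA.eigenvalues j
    · simp only [hk, if_true, mulVec_smul, v_eig, hk, smul_smul, mul_comm]
    · simp [hk]
  · intro y hy
    rw [proj_mulVec]
    have hterm : ∀ k, (if hA.eigenvalues k = hA.eigenvalues j then
        (v A hA k ⬝ᵥ y) • v A hA k else 0) = (v A hA k ⬝ᵥ y) • v A hA k := by
      intro k
      split
      · rfl
      · rename_i hk
        have h0 : hA.eigenvalues k * (v A hA k ⬝ᵥ y) = hA.eigenvalues j * (v A hA k ⬝ᵥ y) := by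
          calc hA.eigenvalues k * (v A hA k ⬝ᵥ y)
              = (hA.eigenvalues k • v A hA k) ⬝ᵥ y := by rw [smul_dotProduct]; rfl
            _ = A.mulVec (v A hA k) ⬝ᵥ y := by rw [v_eig]
            _ = v A hA k ⬝ᵥ A.mulVec y := symm_dot (herm_transpose A hA) _ _
            _ = v A hA k ⬝ᵥ (hA.eigenvalues j • y) := by rw [hy]
            _ = hA.eigenvalues j * (v A hA k ⬝ᵥ y) := by rw [dotProduct_smul]; rfl
        have : (hA.eigenvalues k - hA.eigenvalues j) * (v A hA k ⬝ᵥ y) = 0 := by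
          ring_nf
          linarith [h0]
        have hz : v A hA k ⬝ᵥ y = 0 := by
          rcases mul_eq_zero.mp this with h | h
          · exact absurd (by linarith) hk
          · exact h
        rw [hz]
        simp
    simp only [hterm]
    exact v_complete A hA y

lemma separate (hA : A.IsHermitian) {w w' : n → ℝ}
    (h : ∀ μ E, IsEigenProjection A μ E → E.mulVec w = E.mulVec w') : w = w' := by
  rw [← v_complete A hA w, ← v_complete A hA w']
  refine Finset.sum_congr rfl fun j _ => ?_
  have key : ∀ u : n → ℝ, v A hA j ⬝ᵥ (proj A hA j).mulVec u = v A hA j ⬝ᵥ u := by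
    intro u
    rw [← symm_dot (proj_symm A hA j), proj_mulVec_v, if_pos rfl]
  have h1 := h _ _ (proj_isEigen A hA j)
  have : v A hA j ⬝ᵥ w = v A hA j ⬝ᵥ w' := by
    rw [← key w, ← key w', h1]
  rw [this]

end spectral

/-! ## Uniqueness of eigenprojections and conjugation -/

lemma eigenproj_unique {A : Matrix n n ℝ} {μ : ℝ} {E F : Matrix n n ℝ}
    (hE : IsEigenProjection A μ E) (hF : IsEigenProjection A μ F) : E = F := by
  obtain ⟨hE2, hEs, hE3, hE4⟩ := hE
  obtain ⟨hF2, hFs, hF3, hF4⟩ := hF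
  have hEF : E * F = F := by
    apply mat_ext_of_mulVec
    intro x
    rw [← mulVec_mulVec]
    exact hE4 _ (hF3 x)
  have hFE : F * E = E := by
    apply mat_ext_of_mulVec
    intro x
    rw [← mulVec_mulVec]
    exact hF4 _ (hE3 x)
  calc E = F * E := hFE.symm
    _ = (Eᵀ * Fᵀ)ᵀ := by rw [← transpose_mul, transpose_transpose]
    _ = (E * F)ᵀ := by rw [hEs, hFs]
    _ = Fᵀ := by rw [hEF]
    _ = F := hFs

lemma conj_eigenproj {A P : Matrix n n ℝ} (hP : P * Pᵀ = 1) (hP' : Pᵀ * P = 1)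
    (hcomm : A * P = P * A) {μ : ℝ} {E : Matrix n n ℝ} (hE : IsEigenProjection A μ E) :
    IsEigenProjection A μ (P * E * Pᵀ) := by
  obtain ⟨hE2, hEs, hE3, hE4⟩ := hE
  have hcomm' : Pᵀ * A = A * Pᵀ := by
    calc Pᵀ * A = Pᵀ * A * (P * Pᵀ) := by rw [hP, mul_one]
      _ = Pᵀ * (A * P) * Pᵀ := by noncomm_ring
      _ = Pᵀ * (P * A) * Pᵀ := by rw [hcomm]
      _ = (Pᵀ * P) * (A * Pᵀ) := by noncomm_ring
      _ = A * Pᵀ := by rw [hP', one_mul]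
  refine ⟨?_, ?_, ?_, ?_⟩
  · calc P * E * Pᵀ * (P * E * Pᵀ) = P * E * (Pᵀ * P) * E * Pᵀ := by noncomm_ring
      _ = P * (E * E) * Pᵀ := by rw [hP']; noncomm_ring
      _ = P * E * Pᵀ := by rw [hE2]
  · show (P * E * Pᵀ)ᵀ = P * E * Pᵀ
    rw [transpose_mul, transpose_mul, transpose_transpose, show Eᵀ = E from hEs, ← mul_assoc]
  · intro x
    have hAP : ∀ w : n → ℝ, A.mulVec (P.mulVec w) = P.mulVec (A.mulVec w) := fun w => by
      rw [mulVec_mulVec, mulVec_mulVec, hcomm]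
    simp only [← mulVec_mulVec]
    rw [hAP, hE3 (Pᵀ.mulVec x), mulVec_smul]
  · intro y hy
    have hPy : A.mulVec (Pᵀ.mulVec y) = μ • Pᵀ.mulVec y := by
      rw [mulVec_mulVec, ← hcomm', ← mulVec_mulVec, hy, mulVec_smul]
    simp only [← mulVec_mulVec]
    rw [hE4 _ hPy, mulVec_mulVec, hP, one_mulVec]

/-! ## Cayley graph specifics -/

variable {G : Type*} [Group G] [Fintype G] [DecidableEq G]

/-- right translation permutation matrix: maps `e_a` to `e_{a x⁻¹}` under `mulVec`. -/
def PR (x : G) : Matrix G G ℝ := of fun g h => if h = g * x then 1 else 0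

/-- left translation permutation matrix: maps `e_a` to `e_{x⁻¹ a}` under `mulVec`. -/
def PL (x : G) : Matrix G G ℝ := of fun g h => if h = x * g then 1 else 0

lemma PR_mulVec_single (x a : G) :
    (PR x).mulVec (Pi.single a 1) = Pi.single (a * x⁻¹) (1 : ℝ) := by
  ext g
  simp only [PR, mulVec, dotProduct, of_apply, Pi.single_apply]
  rw [Finset.sum_eq_single (g * x)]
  · simp only [if_true, eq_self_iff_true, one_mul]
    by_cases hc : g * x = a
    · rw [if_pos hc, if_pos (by rw [← hc]; group)]
    · rw [if_neg hc, if_neg (fun hh => hc (by rw [hh]; group))]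
  · intro b _ hb
    rw [if_neg (by exact fun h => hb h), zero_mul]
  · simp

lemma PL_mulVec_single (x a : G) :
    (PL x).mulVec (Pi.single a 1) = Pi.single (x⁻¹ * a) (1 : ℝ) := by
  ext g
  simp only [PL, mulVec, dotProduct, of_apply, Pi.single_apply]
  rw [Finset.sum_eq_single (x * g)]
  · simp only [if_true, eq_self_iff_true, one_mul]
    by_cases hc : x * g = a
    · rw [if_pos hc, if_pos (by rw [← hc]; group)]
    · rw [if_neg hc, if_neg (fun hh => hc (by rw [hh]; group))]
  · intro b _ hb
    rw [if_neg (by exact fun h => hb h), zero_mul]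
  · simp

lemma PR_transpose (x : G) : (PR x)ᵀ = PR x⁻¹ := by
  ext g h
  simp only [transpose_apply, PR, of_apply]
  by_cases hc : g = h * x
  · rw [if_pos hc, if_pos (by rw [hc]; group)]
  · rw [if_neg hc, if_neg (fun hh => hc (by rw [hh]; group))]

lemma PL_transpose (x : G) : (PL x)ᵀ = PL x⁻¹ := by
  ext g h
  simp only [transpose_apply, PL, of_apply]
  by_cases hc : g = x * h
  · rw [if_pos hc, if_pos (by rw [hc]; group)]
  · rw [if_neg hc, if_neg (fun hh => hc (by rw [hh]; group))]

lemma PR_orth (x : G) : PR x * (PR x)ᵀ = 1 := by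
  ext g h
  simp only [mul_apply, transpose_apply, PR, of_apply, one_apply]
  rw [Finset.sum_eq_single (g * x)]
  · by_cases hgh : g = h
    · subst hgh; simp
    · rw [if_pos rfl, if_neg (fun hh => hgh (mul_right_cancel hh)), if_neg hgh, mul_zero]
  · intro b _ hb
    rw [if_neg (fun h => hb h), zero_mul]
  · simp

lemma PL_orth (x : G) : PL x * (PL x)ᵀ = 1 := by
  ext g h
  simp only [mul_apply, transpose_apply, PL, of_apply, one_apply]
  rw [Finset.sum_eq_single (x * g)]
  · by_cases hgh : g = h
    · subst hgh; simp
    · rw [if_pos rfl, if_neg (fun hh => hgh (mul_left_cancel hh)), if_neg hgh, mul_zero]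
  · intro b _ hb
    rw [if_neg (fun h => hb h), zero_mul]
  · simp

lemma PR_orth' (x : G) : (PR x)ᵀ * PR x = 1 := by
  rw [PR_transpose]
  have := PR_orth (G := G) x⁻¹
  rw [PR_transpose, inv_inv] at this
  exact this

lemma PL_orth' (x : G) : (PL x)ᵀ * PL x = 1 := by
  rw [PL_transpose]
  have := PL_orth (G := G) x⁻¹
  rw [PL_transpose, inv_inv] at this
  exact this

variable (C : Finset G)

lemma cayley_PR_comm (x : G) : cayleyAdj C * PR x = PR x * cayleyAdj C := by
  ext g h
  simp only [mul_apply, cayleyAdj, PR, of_apply]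
  rw [Finset.sum_eq_single (h * x⁻¹), Finset.sum_eq_single (g * x)]
  · rw [if_pos (show h = h * x⁻¹ * x by group), if_pos rfl, mul_one, one_mul]
    have e : h * x⁻¹ * g⁻¹ = h * (g * x)⁻¹ := by group
    rw [e]
  · intro b _ hb
    rw [if_neg (fun hh => hb hh), zero_mul]
  · simp
  · intro b _ hb
    rw [if_neg (show ¬ h = b * x from fun hh => hb (by rw [hh]; group)), mul_zero]
  · simp

lemma cayley_PL_comm (hnorm : ∀ x : G, ∀ c ∈ C, x⁻¹ * c * x ∈ C) (x : G) :
    cayleyAdj C * PL x = PL x * cayleyAdj C := by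
  ext g h
  simp only [mul_apply, cayleyAdj, PL, of_apply]
  rw [Finset.sum_eq_single (x⁻¹ * h), Finset.sum_eq_single (x * g)]
  · rw [if_pos (show h = x * (x⁻¹ * h) by group), if_pos rfl, mul_one, one_mul]
    have key : x⁻¹ * h * g⁻¹ ∈ C ↔ h * (x * g)⁻¹ ∈ C := by
      constructor
      · intro hc
        have := hnorm x⁻¹ _ hc
        simpa [mul_assoc] using this
      · intro hc
        have := hnorm x _ hc
        have e : x⁻¹ * (h * (x * g)⁻¹) * x = x⁻¹ * h * g⁻¹ := by group
        rwa [e] at this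
    simp only [key]
  · intro b _ hb
    rw [if_neg (fun hh => hb hh), zero_mul]
  · simp
  · intro b _ hb
    rw [if_neg (show ¬ h = x * b from fun hh => hb (by rw [hh]; group)), mul_zero]
  · simp

lemma cayley_isHermitian (hinv : ∀ c ∈ C, c⁻¹ ∈ C) : (cayleyAdj C).IsHermitian := by
  ext g h
  simp only [conjTranspose_apply, cayleyAdj, of_apply, star_trivial]
  by_cases hc : h * g⁻¹ ∈ C
  · rw [if_pos hc, if_pos (by simpa [_root_.mul_inv_rev] using hinv _ hc)]
  · rw [if_neg hc, if_neg (fun hcc => hc (by simpa [_root_.mul_inv_rev] using hinv _ hcc))]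

section main

/-- The key translation lemma: for g strongly cospectral to 1, there is a sign `s` with
`E e_{x y} = s • E e_{x g y}` for all x y. -/
lemma key_shift (hnorm : ∀ x : G, ∀ c ∈ C, x⁻¹ * c * x ∈ C) {g : G} (hg : StronglyCospectral (cayleyAdj C) 1 g)
    {μ : ℝ} {E : Matrix G G ℝ} (hE : IsEigenProjection (cayleyAdj C) μ E) :
    ∃ s : ℝ, (s = 1 ∨ s = -1) ∧ ∀ x y : G,
      E.mulVec (Pi.single (x * y) 1) = s • E.mulVec (Pi.single (x * g * y) 1) := by
  -- E commutes with PL and PR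
  have hcommR : ∀ x : G, PR x * E = E * PR x := by
    intro x
    have h1 : IsEigenProjection (cayleyAdj C) μ (PR x * E * (PR x)ᵀ) :=
      conj_eigenproj (PR_orth x) (PR_orth' x) (cayley_PR_comm C x) hE
    have h2 : PR x * E * (PR x)ᵀ = E := eigenproj_unique h1 hE
    calc PR x * E = PR x * E * ((PR x)ᵀ * PR x) := by rw [PR_orth', mul_one]
      _ = (PR x * E * (PR x)ᵀ) * PR x := by noncomm_ring
      _ = E * PR x := by rw [h2]
  have hcommL : ∀ x : G, PL x * E = E * PL x := by
    intro x
    have h1 : IsEigenProjection (cayleyAdj C) μ (PL x * E * (PL x)ᵀ) :=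
      conj_eigenproj (PL_orth x) (PL_orth' x) (cayley_PL_comm C hnorm x) hE
    have h2 : PL x * E * (PL x)ᵀ = E := eigenproj_unique h1 hE
    calc PL x * E = PL x * E * ((PL x)ᵀ * PL x) := by rw [PL_orth', mul_one]
      _ = (PL x * E * (PL x)ᵀ) * PL x := by noncomm_ring
      _ = E * PL x := by rw [h2]
  have swapR : ∀ (y : G) (w : G → ℝ),
      (PR y).mulVec (E.mulVec w) = E.mulVec ((PR y).mulVec w) := fun y w => by
    rw [mulVec_mulVec, mulVec_mulVec, hcommR]
  have swapL : ∀ (x : G) (w : G → ℝ),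
      (PL x).mulVec (E.mulVec w) = E.mulVec ((PL x).mulVec w) := fun x w => by
    rw [mulVec_mulVec, mulVec_mulVec, hcommL]
  have move : ∀ x y a : G, (PL x⁻¹).mulVec ((PR y⁻¹).mulVec (E.mulVec (Pi.single a 1)))
      = E.mulVec (Pi.single (x * a * y) 1) := by
    intro x y a
    rw [swapR, PR_mulVec_single, inv_inv, swapL, PL_mulVec_single, inv_inv, mul_assoc]
  rcases hg μ E hE with h | h
  · refine ⟨1, Or.inl rfl, fun x y => ?_⟩
    have h2 := congrArg (fun w => (PL x⁻¹).mulVec ((PR y⁻¹).mulVec w)) h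
    rw [move x y 1, move x y g] at h2
    rw [one_smul]
    rw [mul_one] at h2
    exact h2
  · refine ⟨-1, Or.inr rfl, fun x y => ?_⟩
    have h2 := congrArg (fun w => (PL x⁻¹).mulVec ((PR y⁻¹).mulVec w)) h
    simp only [mulVec_neg] at h2
    rw [move x y 1, move x y g] at h2
    rw [neg_one_smul]
    rw [mul_one] at h2
    exact h2

end main
end SC5

theorem stmt5 {G : Type*} [Group G] [Fintype G] [DecidableEq G] (C : Finset G)
    (h1 : (1 : G) ∉ C) (hinv : ∀ c ∈ C, c⁻¹ ∈ C)
    (hnorm : ∀ x : G, ∀ c ∈ C, x⁻¹ * c * x ∈ C) :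
    ∃ N : Subgroup G,
      (N : Set G) = {g : G | StronglyCospectral (cayleyAdj C) 1 g} ∧
      N.Normal ∧ (∀ h ∈ N, h ^ 2 = 1) ∧ (∀ a ∈ N, ∀ b ∈ N, a * b = b * a) := by
  classical
  open SC5 in
  set A := cayleyAdj C with hAdef
  have hA : A.IsHermitian := cayley_isHermitian C hinv
  have hsingle : ∀ u v : G, (Pi.single u 1 : G → ℝ) = Pi.single v 1 → u = v := by
    intro u v h
    by_contra hc
    have h0 := congrFun h u
    simp [Pi.single_apply, hc] at h0
  have central : ∀ a : G, StronglyCospectral A 1 a → ∀ x : G, x * a = a * x := by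
    intro a ha x
    have hsep : (Pi.single (x * a) 1 : G → ℝ) = Pi.single (a * x) 1 := by
      apply separate A hA
      intro μ E hE
      obtain ⟨s, hs, hsa⟩ := key_shift C hnorm ha hE
      have hx1 := hsa x 1
      have hx2 := hsa 1 x
      simp only [one_mul, mul_one] at hx1 hx2
      rcases hs with rfl | rfl
      · rw [one_smul] at hx1 hx2
        rw [← hx1, ← hx2]
      · rw [neg_one_smul] at hx1 hx2
        exact neg_injective (hx1.symm.trans hx2)
    exact hsingle _ _ hsep
  have sq1 : ∀ a : G, StronglyCospectral A 1 a → a * a = 1 := by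
    intro a ha
    have hsep : (Pi.single (1 : G) 1 : G → ℝ) = Pi.single (a * a) 1 := by
      apply separate A hA
      intro μ E hE
      obtain ⟨s, hs, hsa⟩ := key_shift C hnorm ha hE
      have hx1 := hsa 1 1
      have hx2 := hsa 1 a
      simp only [one_mul, mul_one] at hx1 hx2
      rw [hx1, hx2, smul_smul]
      rcases hs with rfl | rfl <;> norm_num
    exact (hsingle _ _ hsep).symm
  refine ⟨{ carrier := {g : G | StronglyCospectral A 1 g}
            one_mem' := fun μ E hE => Or.inl rfl
            mul_mem' := ?_
            inv_mem' := ?_ }, rfl, ?_, ?_, ?_⟩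
  · -- closure under multiplication
    intro a b ha hb μ E hE
    obtain ⟨s, hs, hsa⟩ := key_shift C hnorm ha hE
    obtain ⟨t, ht, htb⟩ := key_shift C hnorm hb hE
    have hx1 := hsa 1 1
    have hx2 := htb a 1
    simp only [one_mul, mul_one] at hx1 hx2
    have key : E.mulVec (Pi.single 1 1) = (s * t) • E.mulVec (Pi.single (a * b) 1) := by
      rw [hx1, hx2, smul_smul]
    rcases hs with rfl | rfl <;> rcases ht with rfl | rfl
    · left; simpa using key
    · right; simpa using key
    · right; simpa using key
    · left; simpa using key
  · -- closure under inverse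
    intro a ha μ E hE
    obtain ⟨s, hs, hsa⟩ := key_shift C hnorm ha hE
    have hx1 := hsa a⁻¹ 1
    simp only [mul_one, inv_mul_cancel] at hx1
    rcases hs with rfl | rfl
    · left
      rw [one_smul] at hx1
      exact hx1.symm
    · right
      rw [neg_one_smul] at hx1
      rw [hx1, neg_neg]
  · -- normality
    constructor
    intro a ha x
    have e : x * a * x⁻¹ = a := by
      rw [central a ha x]
      group
    show StronglyCospectral A 1 (x * a * x⁻¹)
    rw [e]
    exact ha
  · -- involutions
    intro h hh
    rw [pow_two]
    exact sq1 h hh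
  · -- commutativity
    intro a ha b hb
    exact (central a ha b).symm
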